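/- arXiv:0906.4434 — 4 statements merged into one kernel-verified Lean document; each statement's English description precedes it below -/
import Mathlib

section
/- Let y, z be positive semidefinite n×n matrices with y ≤ z and z invertible, and let 1 < α ≤ 2. Then τ(z^{(1−α)/2}(z^α − y^α)z^{(1−α)/2}) ≤ 2 τ(z − y), where τ is the trace on n×n matrices. -/
open Matrix
open scoped ComplexOrder

/-- Real power of a Hermitian matrix, via the spectral theorem. -/
noncomputable def herPow {d : ℕ} {A : Matrix (Fin d) (Fin d) ℂ} (hA : A.IsHermitian) (r : ℝ) :
    Matrix (Fin d) (Fin d) ℂ :=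
  hA.eigenvectorUnitary.1 * Matrix.diagonal (fun i => ((hA.eigenvalues i ^ r : ℝ) : ℂ)) *
    (star hA.eigenvectorUnitary : Matrix (Fin d) (Fin d) ℂ)

variable {d : ℕ} {A : Matrix (Fin d) (Fin d) ℂ}

lemma herPow_eq (hA : A.IsHermitian) (r : ℝ) :
    herPow hA r = hA.eigenvectorUnitary.1 *
      Matrix.diagonal (fun i => ((hA.eigenvalues i ^ r : ℝ) : ℂ)) *
      (hA.eigenvectorUnitary.1)ᴴ := rfl

lemma herPow_isHermitian (hA : A.IsHermitian) (r : ℝ) : (herPow hA r).IsHermitian := by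
  rw [herPow_eq, Matrix.IsHermitian, Matrix.conjTranspose_mul, Matrix.conjTranspose_mul,
    Matrix.conjTranspose_conjTranspose, Matrix.diagonal_conjTranspose, mul_assoc]
  congr 2
  ext i j
  simp [Matrix.diagonal, Pi.star_def]

lemma herPow_mul (hA : A.IsHermitian) {r s : ℝ}
    (h : ∀ i, hA.eigenvalues i ^ r * hA.eigenvalues i ^ s = hA.eigenvalues i ^ (r + s)) :
    herPow hA r * herPow hA s = herPow hA (r + s) := by
  have hU : (hA.eigenvectorUnitary.1)ᴴ * hA.eigenvectorUnitary.1 = 1 :=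
    Matrix.mem_unitaryGroup_iff'.mp hA.eigenvectorUnitary.2
  rw [herPow_eq, herPow_eq, herPow_eq]
  simp only [← mul_assoc]
  rw [mul_assoc (_ * _) (hA.eigenvectorUnitary.1)ᴴ hA.eigenvectorUnitary.1, hU, mul_one,
    mul_assoc _ (Matrix.diagonal _) (Matrix.diagonal _), Matrix.diagonal_mul_diagonal]
  simp only [← Complex.ofReal_mul, h]

lemma herPow_one (hA : A.IsHermitian) : herPow hA 1 = A := by
  rw [herPow_eq]
  simp only [Real.rpow_one]
  exact (hA.spectral_theorem).symm

lemma herPow_zero (hA : A.IsHermitian) : herPow hA 0 = 1 := by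
  have hU : hA.eigenvectorUnitary.1 * (hA.eigenvectorUnitary.1)ᴴ = 1 :=
    Matrix.mem_unitaryGroup_iff.mp hA.eigenvectorUnitary.2
  rw [herPow_eq]
  simp only [Real.rpow_zero, Complex.ofReal_one]
  rw [show Matrix.diagonal (fun _ : Fin d => (1:ℂ)) = 1 from Matrix.diagonal_one, mul_one, hU]

lemma herPow_posSemidef {hA : A.IsHermitian} (h : ∀ i, 0 ≤ hA.eigenvalues i) (r : ℝ) :
    (herPow hA r).PosSemidef := by
  rw [herPow_eq]
  exact (Matrix.PosSemidef.diagonal fun i =>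
    Complex.zero_le_real.mpr (Real.rpow_nonneg (h i) r)).mul_mul_conjTranspose_same _

section quadratic

variable {v w : Fin d → ℂ} {M : Matrix (Fin d) (Fin d) ℂ}

/-- squared norm of a complex vector -/
noncomputable def sqn (v : Fin d → ℂ) : ℝ := (dotProduct (star v) v).re

lemma sqn_eq (v : Fin d → ℂ) : sqn v = ∑ i, Complex.normSq (v i) := by
  unfold sqn dotProduct
  rw [Complex.re_sum]
  congr 1
  funext i
  simp [Pi.star_apply, ← Complex.normSq_eq_conj_mul_self]

lemma sqn_nonneg (v : Fin d → ℂ) : 0 ≤ sqn v := by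
  rw [sqn_eq]; exact Finset.sum_nonneg fun i _ => Complex.normSq_nonneg _

lemma sqn_pos (hv : v ≠ 0) : 0 < sqn v := by
  rcases Function.ne_iff.mp hv with ⟨i, hi⟩
  rw [sqn_eq]
  refine Finset.sum_pos' (fun j _ => Complex.normSq_nonneg _) ⟨i, Finset.mem_univ i, ?_⟩
  simpa [Complex.normSq_pos] using hi

lemma sqn_smul (t : ℝ) (v : Fin d → ℂ) : sqn (t • v) = t ^ 2 * sqn v := by
  rw [sqn_eq, sqn_eq, Finset.mul_sum]
  congr 1
  funext i
  simp only [Pi.smul_apply, Complex.real_smul, Complex.normSq_mul, Complex.normSq_ofReal]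
  ring

lemma dotProduct_star_self_eq (M : Matrix (Fin d) (Fin d) ℂ) (v : Fin d → ℂ) :
    dotProduct (star v) ((Mᴴ * M) *ᵥ v) =
      dotProduct (star (M *ᵥ v)) (M *ᵥ v) := by
  rw [← Matrix.mulVec_mulVec, Matrix.dotProduct_mulVec, ← Matrix.star_mulVec]

/-- contraction: if `1 - MᴴM ≥ 0` then `‖Mv‖² ≤ ‖v‖²`. -/
lemma sqn_mulVec_le (hM : (1 - Mᴴ * M).PosSemidef) (v : Fin d → ℂ) :
    sqn (M *ᵥ v) ≤ sqn v := by
  have h := hM.re_dotProduct_nonneg v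
  rw [Matrix.sub_mulVec, dotProduct_sub, Matrix.one_mulVec, map_sub,
    dotProduct_star_self_eq] at h
  simp only [RCLike.re_to_complex] at h
  unfold sqn
  linarith

end quadratic

section eig

variable {v : Fin d → ℂ} {M B C : Matrix (Fin d) (Fin d) ℂ}

lemma real_smul_vec (t : ℝ) (v : Fin d → ℂ) : t • v = (t : ℂ) • v := by
  funext i
  simp [Complex.real_smul]

lemma eig_le_one_of_psd (h : (1 - M).PosSemidef) {t : ℝ} (hv : v ≠ 0)
    (he : M *ᵥ v = t • v) : t ≤ 1 := by
  have h2 := h.re_dotProduct_nonneg v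
  rw [Matrix.sub_mulVec, dotProduct_sub, Matrix.one_mulVec, map_sub, he,
    real_smul_vec, dotProduct_smul, smul_eq_mul] at h2
  simp only [RCLike.re_to_complex, Complex.re_ofReal_mul] at h2
  have h3 : (0:ℝ) < sqn v := sqn_pos hv
  unfold sqn at h3
  nlinarith

lemma eig_shift {t : ℝ} (ht : t ≠ 0) (hv : v ≠ 0) (he : (B * C) *ᵥ v = t • v) :
    C *ᵥ v ≠ 0 ∧ (C * B) *ᵥ (C *ᵥ v) = t • (C *ᵥ v) := by
  constructor
  · intro h0
    rw [← Matrix.mulVec_mulVec, h0, Matrix.mulVec_zero] at he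
    rcases smul_eq_zero.mp he.symm with h | h
    · exact ht h
    · exact hv h
  · rw [← Matrix.mulVec_mulVec, Matrix.mulVec_mulVec v B C, he, real_smul_vec,
      Matrix.mulVec_smul, ← real_smul_vec]

lemma eig_le_one_of_contractions (hC : (1 - Bᴴ * B).PosSemidef)
    (hD : (1 - Cᴴ * C).PosSemidef) {t : ℝ} (ht : 0 ≤ t) (hv : v ≠ 0)
    (he : (B * C) *ᵥ v = t • v) : t ≤ 1 := by
  have h1 : sqn ((B * C) *ᵥ v) = t ^ 2 * sqn v := by rw [he, sqn_smul]
  have h2 : sqn ((B * C) *ᵥ v) ≤ sqn v := by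
    rw [← Matrix.mulVec_mulVec]
    exact le_trans (sqn_mulVec_le hC _) (sqn_mulVec_le hD v)
  have h3 : (0:ℝ) < sqn v := sqn_pos hv
  have h5 : t ^ 2 ≤ 1 := le_of_mul_le_mul_right (by linarith) h3
  nlinarith

end eig

section specB

variable {M : Matrix (Fin d) (Fin d) ℂ}

lemma psd_one_sub_of_eig (hM : M.IsHermitian) (h : ∀ i, hM.eigenvalues i ≤ 1) :
    (1 - M).PosSemidef := by
  have hU : hM.eigenvectorUnitary.1 * (hM.eigenvectorUnitary.1)ᴴ = 1 :=
    Matrix.mem_unitaryGroup_iff.mp hM.eigenvectorUnitary.2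
  have hst : M = hM.eigenvectorUnitary.1 *
      Matrix.diagonal (RCLike.ofReal ∘ hM.eigenvalues) * (hM.eigenvectorUnitary.1)ᴴ :=
    hM.spectral_theorem
  have hdiag : Matrix.diagonal (fun i => ((1 - hM.eigenvalues i : ℝ) : ℂ))
      = 1 - Matrix.diagonal (RCLike.ofReal ∘ hM.eigenvalues) := by
    rw [← Matrix.diagonal_one, Matrix.diagonal_sub]
    funext i
    simp
  have key : 1 - M = hM.eigenvectorUnitary.1 *
      Matrix.diagonal (fun i => ((1 - hM.eigenvalues i : ℝ) : ℂ)) *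
      (hM.eigenvectorUnitary.1)ᴴ := by
    rw [hdiag, Matrix.mul_sub, Matrix.sub_mul, Matrix.mul_one, hU, ← hst]
  rw [key]
  exact (Matrix.PosSemidef.diagonal fun i =>
    Complex.zero_le_real.mpr (by linarith [h i])).mul_mul_conjTranspose_same _

lemma eigenvectorBasis_ne_zero (hM : M.IsHermitian) (i : Fin d) :
    (⇑(hM.eigenvectorBasis i) : Fin d → ℂ) ≠ 0 := by
  intro h0
  have h1 : hM.eigenvectorBasis i ≠ 0 := hM.eigenvectorBasis.orthonormal.ne_zero i
  apply h1
  ext j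
  exact congrFun h0 j

end specB

section flip

variable {M X : Matrix (Fin d) (Fin d) ℂ}

lemma posSemidef_eigenvalues_le_one (hM : M.PosSemidef) (hle : (1 - M).PosSemidef)
    (i : Fin d) : hM.1.eigenvalues i ≤ 1 :=
  eig_le_one_of_psd hle (eigenvectorBasis_ne_zero hM.1 i) (hM.1.mulVec_eigenvectorBasis i)

/-- if `1 - XXᴴ ≥ 0` then `1 - XᴴX ≥ 0`. -/
lemma flip_contraction (h : (1 - X * Xᴴ).PosSemidef) : (1 - Xᴴ * X).PosSemidef := by
  have hM : (Xᴴ * X).PosSemidef := Matrix.posSemidef_conjTranspose_mul_self X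
  apply psd_one_sub_of_eig hM.1
  intro i
  set t := hM.1.eigenvalues i with ht
  rcases eq_or_lt_of_le (hM.eigenvalues_nonneg i) with h0 | h0
  · rw [ht, ← h0]; norm_num
  · have he := hM.1.mulVec_eigenvectorBasis i
    obtain ⟨hv1, he1⟩ := eig_shift (ne_of_gt h0) (eigenvectorBasis_ne_zero hM.1 i) he
    exact eig_le_one_of_psd h hv1 he1

end flip

section yz

variable {y z : Matrix (Fin d) (Fin d) ℂ}

lemma zp_mul (hz : z.PosDef) (r s : ℝ) :
    herPow hz.1 r * herPow hz.1 s = herPow hz.1 (r + s) :=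
  herPow_mul hz.1 fun i => (Real.rpow_add (hz.eigenvalues_pos i) r s).symm

lemma yp_mul (hy : y.PosSemidef) {r s : ℝ} (hr : 0 ≤ r) (hs : 0 ≤ s) :
    herPow hy.1 r * herPow hy.1 s = herPow hy.1 (r + s) :=
  herPow_mul hy.1 fun i => (Real.rpow_add_of_nonneg (hy.eigenvalues_nonneg i) hr hs).symm

lemma zp_psd (hz : z.PosDef) (r : ℝ) : (herPow hz.1 r).PosSemidef :=
  herPow_posSemidef (fun i => le_of_lt (hz.eigenvalues_pos i)) r

lemma yp_psd (hy : y.PosSemidef) (r : ℝ) : (herPow hy.1 r).PosSemidef :=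
  herPow_posSemidef (fun i => hy.eigenvalues_nonneg i) r

end yz

lemma herPow_congr {A : Matrix (Fin d) (Fin d) ℂ} (hA : A.IsHermitian) {r s : ℝ} (h : r = s) :
    herPow hA r = herPow hA s := by rw [h]

section W

variable {y z : Matrix (Fin d) (Fin d) ℂ}

/-- `z^{-q/2} y^q z^{-q/2}` -/
noncomputable def Wm (hy : y.PosSemidef) (hz : z.PosDef) (q : ℝ) :
    Matrix (Fin d) (Fin d) ℂ :=
  herPow hz.1 (-(q/2)) * herPow hy.1 q * herPow hz.1 (-(q/2))

lemma W_psd (hy : y.PosSemidef) (hz : z.PosDef) (q : ℝ) : (Wm hy hz q).PosSemidef := by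
  have h := (yp_psd hy q).mul_mul_conjTranspose_same (herPow hz.1 (-(q/2)))
  rwa [(herPow_isHermitian hz.1 (-(q/2))).eq] at h

lemma W_midpoint (hy : y.PosSemidef) (hz : z.PosDef) {p q : ℝ} (hp : 0 ≤ p) (hq : 0 ≤ q)
    (hP : (1 - Wm hy hz p).PosSemidef) (hQ : (1 - Wm hy hz q).PosSemidef) :
    (1 - Wm hy hz ((p + q) / 2)).PosSemidef := by
  set m : ℝ := (p + q) / 2 with hm
  have hWm := W_psd hy hz m
  apply psd_one_sub_of_eig hWm.1
  intro i
  have main : ∀ (t : ℝ) (v : Fin d → ℂ), 0 < t → v ≠ 0 → Wm hy hz m *ᵥ v = t • v → t ≤ 1 := by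
    intro t v h0 hv he
    have ht : t ≠ 0 := ne_of_gt h0
    rw [show Wm hy hz m = herPow hz.1 (-(m/2)) * (herPow hy.1 m * herPow hz.1 (-(m/2))) from
      mul_assoc _ _ _] at he
    obtain ⟨hv1, he1⟩ := eig_shift ht hv he
    have hstep2 : (herPow hy.1 m * herPow hz.1 (-(m/2))) * herPow hz.1 (-(m/2))
        = herPow hy.1 (p/2) * (herPow hy.1 (q/2) * (herPow hz.1 (-(q/2)) * herPow hz.1 (-(p/2)))) := by
      rw [mul_assoc, zp_mul hz, zp_mul hz, ← mul_assoc, yp_mul hy (by linarith) (by linarith),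
        herPow_congr hy.1 (show p/2 + q/2 = m by rw [hm]; ring),
        herPow_congr hz.1 (show -(q/2) + -(p/2) = -(m/2) + -(m/2) by rw [hm]; ring)]
    rw [hstep2] at he1
    obtain ⟨hv2, he2⟩ := eig_shift ht hv1 he1
    have hstep3 : (herPow hy.1 (q/2) * (herPow hz.1 (-(q/2)) * herPow hz.1 (-(p/2)))) * herPow hy.1 (p/2)
        = (herPow hy.1 (q/2) * herPow hz.1 (-(q/2))) * (herPow hz.1 (-(p/2)) * herPow hy.1 (p/2)) := by
      simp only [mul_assoc]
    rw [hstep3] at he2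
    have hB : (1 - (herPow hy.1 (q/2) * herPow hz.1 (-(q/2)))ᴴ *
        (herPow hy.1 (q/2) * herPow hz.1 (-(q/2)))).PosSemidef := by
      have heq : (herPow hy.1 (q/2) * herPow hz.1 (-(q/2)))ᴴ *
          (herPow hy.1 (q/2) * herPow hz.1 (-(q/2))) = Wm hy hz q := by
        rw [Matrix.conjTranspose_mul, (herPow_isHermitian hy.1 _).eq,
          (herPow_isHermitian hz.1 _).eq]
        calc herPow hz.1 (-(q/2)) * herPow hy.1 (q/2) *
              (herPow hy.1 (q/2) * herPow hz.1 (-(q/2)))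
            = herPow hz.1 (-(q/2)) * (herPow hy.1 (q/2) * herPow hy.1 (q/2)) *
              herPow hz.1 (-(q/2)) := by simp only [mul_assoc]
          _ = Wm hy hz q := by
              rw [yp_mul hy (by linarith) (by linarith),
                herPow_congr hy.1 (show q/2 + q/2 = q by ring)]
              rfl
      rw [heq]; exact hQ
    have hC : (1 - (herPow hz.1 (-(p/2)) * herPow hy.1 (p/2))ᴴ *
        (herPow hz.1 (-(p/2)) * herPow hy.1 (p/2))).PosSemidef := by
      apply flip_contraction
      have heq : (herPow hz.1 (-(p/2)) * herPow hy.1 (p/2)) *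
          (herPow hz.1 (-(p/2)) * herPow hy.1 (p/2))ᴴ = Wm hy hz p := by
        rw [Matrix.conjTranspose_mul, (herPow_isHermitian hy.1 _).eq,
          (herPow_isHermitian hz.1 _).eq]
        calc herPow hz.1 (-(p/2)) * herPow hy.1 (p/2) *
              (herPow hy.1 (p/2) * herPow hz.1 (-(p/2)))
            = herPow hz.1 (-(p/2)) * (herPow hy.1 (p/2) * herPow hy.1 (p/2)) *
              herPow hz.1 (-(p/2)) := by simp only [mul_assoc]
          _ = Wm hy hz p := by
              rw [yp_mul hy (by linarith) (by linarith),
                herPow_congr hy.1 (show p/2 + p/2 = p by ring)]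
              rfl
      rw [heq]; exact hP
    exact eig_le_one_of_contractions hB hC (le_of_lt h0) hv2 he2
  rcases eq_or_lt_of_le (hWm.eigenvalues_nonneg i) with h0 | h0
  · linarith
  · exact main _ _ h0 (eigenvectorBasis_ne_zero hWm.1 i) (hWm.1.mulVec_eigenvectorBasis i)

end W

section base

variable {y z : Matrix (Fin d) (Fin d) ℂ}

lemma W_zero (hy : y.PosSemidef) (hz : z.PosDef) : (1 - Wm hy hz 0).PosSemidef := by
  have : Wm hy hz 0 = 1 := by
    unfold Wm
    rw [herPow_congr hz.1 (show -(0/2:ℝ) = 0 by norm_num), herPow_zero, herPow_zero]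
    simp
  rw [this, sub_self]
  exact Matrix.PosSemidef.zero

lemma W_one (hy : y.PosSemidef) (hz : z.PosDef) (hyz : (z - y).PosSemidef) :
    (1 - Wm hy hz 1).PosSemidef := by
  have key : herPow hz.1 (-(1/2)) * (z - y) * herPow hz.1 (-(1/2)) = 1 - Wm hy hz 1 := by
    rw [Matrix.mul_sub, Matrix.sub_mul]
    have hzz : herPow hz.1 (-(1/2)) * z * herPow hz.1 (-(1/2)) = 1 := by
      have h1 : herPow hz.1 (-(1/2)) * herPow hz.1 1 * herPow hz.1 (-(1/2)) = 1 := by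
        rw [zp_mul hz, zp_mul hz, herPow_congr hz.1 (show -(1/2:ℝ) + 1 + -(1/2) = 0 by norm_num),
          herPow_zero]
      rwa [herPow_one hz.1] at h1
    rw [hzz]
    congr 1
    unfold Wm
    rw [herPow_one hy.1]
  have h := hyz.mul_mul_conjTranspose_same (herPow hz.1 (-(1/2)))
  rwa [(herPow_isHermitian hz.1 (-(1/2))).eq, key] at h

lemma W_dyadic (hy : y.PosSemidef) (hz : z.PosDef) (hyz : (z - y).PosSemidef) :
    ∀ (k j : ℕ), j ≤ 2 ^ k → (1 - Wm hy hz (j / 2 ^ k)).PosSemidef := by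
  intro k
  induction k with
  | zero =>
    intro j hj
    interval_cases j
    · simpa using W_zero hy hz
    · simpa using W_one hy hz hyz
  | succ k ih =>
    intro j hj
    have h1 : j / 2 ≤ 2 ^ k := by omega
    have h2 : j - j / 2 ≤ 2 ^ k := by omega
    have key : ((j : ℝ) / 2 ^ (k + 1)) = ((j / 2 : ℕ) / 2 ^ k + ((j - j / 2 : ℕ)) / 2 ^ k) / 2 := by
      have : ((j / 2 : ℕ) : ℝ) + ((j - j / 2 : ℕ) : ℝ) = (j : ℝ) := by
        push_cast [Nat.cast_sub (Nat.div_le_self j 2)]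
        ring
      rw [← this, pow_succ]
      field_simp
    rw [key]
    exact W_midpoint hy hz (by positivity) (by positivity) (ih _ h1) (ih _ h2)

section limit

variable {y z H : Matrix (Fin d) (Fin d) ℂ}

lemma hermitian_form_real (hH : H.IsHermitian) (v : Fin d → ℂ) :
    dotProduct (star v) (H *ᵥ v) = ((dotProduct (star v) (H *ᵥ v)).re : ℂ) := by
  have hst : (starRingEnd ℂ) (dotProduct (star v) (H *ᵥ v))
      = dotProduct (star v) (H *ᵥ v) := by
    have h1 : star (dotProduct (star v) (H *ᵥ v))
        = dotProduct (star (H *ᵥ v)) v := by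
      rw [Matrix.star_dotProduct, star_star]
    rw [RCLike.star_def] at h1  -- maybe unneeded
    rw [h1, Matrix.star_mulVec, ← Matrix.dotProduct_mulVec, hH.eq]
  exact ((Complex.conj_eq_iff_re).mp hst).symm

lemma psd_of_re_form (hH : H.IsHermitian)
    (h : ∀ v : Fin d → ℂ, 0 ≤ (dotProduct (star v) (H *ᵥ v)).re) : H.PosSemidef :=
  Matrix.posSemidef_iff_dotProduct_mulVec.mpr ⟨hH, fun v => by
    rw [hermitian_form_real hH v]
    exact Complex.zero_le_real.mpr (h v)⟩

lemma herPow_continuousAt {A : Matrix (Fin d) (Fin d) ℂ} (hA : A.IsHermitian) {g : ℝ → ℝ}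
    {x : ℝ} (hg : ContinuousAt g x) (hgx : g x ≠ 0) :
    ContinuousAt (fun q => herPow hA (g q)) x := by
  have h1 : ContinuousAt (fun q => fun i => ((hA.eigenvalues i ^ g q : ℝ) : ℂ)) x := by
    apply continuousAt_pi.mpr
    intro i
    exact Complex.continuous_ofReal.continuousAt.comp
      ((Real.continuousAt_const_rpow' hgx).comp hg)
  have h2 : Continuous (fun D : Matrix (Fin d) (Fin d) ℂ =>
      hA.eigenvectorUnitary.1 * D * (hA.eigenvectorUnitary.1)ᴴ) :=
    (continuous_const.matrix_mul continuous_id).matrix_mul continuous_const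
  have h3 : Continuous (fun v : Fin d → ℂ => Matrix.diagonal v) :=
    continuous_id.matrix_diagonal
  exact h2.continuousAt.comp (h3.continuousAt.comp h1)

lemma W_continuousAt (hy : y.PosSemidef) (hz : z.PosDef) {x : ℝ} (hx : x ≠ 0) :
    ContinuousAt (fun q => Wm hy hz q) x := by
  have hg : ContinuousAt (fun q : ℝ => -(q/2)) x := (continuousAt_id.div_const 2).neg
  have hgx : -(x/2) ≠ 0 := neg_ne_zero.mpr (div_ne_zero hx two_ne_zero)
  unfold Wm
  exact ((herPow_continuousAt hz.1 hg hgx).mul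
    (herPow_continuousAt hy.1 continuousAt_id hx)).mul (herPow_continuousAt hz.1 hg hgx)

lemma W_limit (hy : y.PosSemidef) (hz : z.PosDef) (hyz : (z - y).PosSemidef)
    {x : ℝ} (hx0 : 0 < x) (hx1 : x ≤ 1) : (1 - Wm hy hz x).PosSemidef := by
  set q : ℕ → ℝ := fun n => (⌈x * 2 ^ n⌉₊ : ℝ) / 2 ^ n with hq
  have hqd : ∀ n, (1 - Wm hy hz (q n)).PosSemidef := by
    intro n
    apply W_dyadic hy hz hyz n
    rw [Nat.ceil_le]
    push_cast
    nlinarith [pow_pos (show (0:ℝ) < 2 by norm_num) n]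
  have htend : Filter.Tendsto q Filter.atTop (nhds x) := by
    have hlow : ∀ n, x ≤ q n := by
      intro n
      simp only [hq]
      rw [le_div_iff₀ (by positivity)]
      exact Nat.le_ceil _
    have hup : ∀ n, q n ≤ x + (1/2) ^ n := by
      intro n
      simp only [hq]
      rw [div_le_iff₀ (by positivity)]
      have := Nat.ceil_lt_add_one (show 0 ≤ x * 2 ^ n by positivity)
      calc (⌈x * 2 ^ n⌉₊ : ℝ) ≤ x * 2 ^ n + 1 := le_of_lt this
        _ = (x + (1/2) ^ n) * 2 ^ n := by
            rw [add_mul]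
            congr 1
            rw [← mul_pow]
            norm_num
    have h2 : Filter.Tendsto (fun n : ℕ => x + (1/2:ℝ) ^ n) Filter.atTop (nhds (x + 0)) :=
      tendsto_const_nhds.add (tendsto_pow_atTop_nhds_zero_of_lt_one (by norm_num) (by norm_num))
    rw [add_zero] at h2
    exact tendsto_of_tendsto_of_tendsto_of_le_of_le tendsto_const_nhds h2 hlow hup
  have hWx : ContinuousAt (fun t => Wm hy hz t) x := W_continuousAt hy hz (ne_of_gt hx0)
  apply psd_of_re_form ((Matrix.isHermitian_one).sub (W_psd hy hz x).1)
  intro v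
  have hcont : Filter.Tendsto
      (fun n => (dotProduct (star v) ((1 - Wm hy hz (q n)) *ᵥ v)).re)
      Filter.atTop (nhds ((dotProduct (star v) ((1 - Wm hy hz x) *ᵥ v)).re)) := by
    have hf : Continuous (fun M : Matrix (Fin d) (Fin d) ℂ =>
        (dotProduct (star v) ((1 - M) *ᵥ v)).re) := by
      apply Complex.continuous_re.comp
      exact (continuous_const.dotProduct
        (((continuous_const.sub continuous_id).matrix_mulVec continuous_const)))
    have hc2 : ContinuousAt
        (fun t : ℝ => (dotProduct (star v) ((1 - Wm hy hz t) *ᵥ v)).re) x :=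
      hf.continuousAt.comp hWx
    exact hc2.tendsto.comp htend
  refine ge_of_tendsto hcont (Filter.Eventually.of_forall fun n => ?_)
  have := (hqd n).re_dotProduct_nonneg v
  simpa [RCLike.re_to_complex] using this

end limit

section final

variable {y z M : Matrix (Fin d) (Fin d) ℂ}

lemma loewner_heinz (hy : y.PosSemidef) (hz : z.PosDef) (hyz : (z - y).PosSemidef)
    {r : ℝ} (hr0 : 0 ≤ r) (hr1 : r ≤ 1) :
    (herPow hz.1 r - herPow hy.1 r).PosSemidef := by
  rcases eq_or_lt_of_le hr0 with h0 | h0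
  · rw [herPow_congr hz.1 h0.symm, herPow_congr hy.1 h0.symm, herPow_zero, herPow_zero, sub_self]
    exact Matrix.PosSemidef.zero
  · have hW := W_limit hy hz hyz h0 hr1
    have h1 : herPow hz.1 (r/2) * herPow hz.1 (-(r/2)) = 1 := by
      rw [zp_mul hz, herPow_congr hz.1 (show r/2 + -(r/2) = 0 by ring), herPow_zero]
    have h2 : herPow hz.1 (-(r/2)) * herPow hz.1 (r/2) = 1 := by
      rw [zp_mul hz, herPow_congr hz.1 (show -(r/2) + r/2 = 0 by ring), herPow_zero]
    have kz : herPow hz.1 (r/2) * herPow hz.1 (r/2) = herPow hz.1 r := by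
      rw [zp_mul hz, herPow_congr hz.1 (show r/2 + r/2 = r by ring)]
    have kw : herPow hz.1 (r/2) * Wm hy hz r * herPow hz.1 (r/2) = herPow hy.1 r := by
      show herPow hz.1 (r/2) * (herPow hz.1 (-(r/2)) * herPow hy.1 r * herPow hz.1 (-(r/2))) *
          herPow hz.1 (r/2) = herPow hy.1 r
      simp only [← mul_assoc]
      rw [h1, one_mul, mul_assoc, h2, mul_one]
    have key : herPow hz.1 (r/2) * (1 - Wm hy hz r) * herPow hz.1 (r/2)
        = herPow hz.1 r - herPow hy.1 r := by
      rw [Matrix.mul_sub, Matrix.sub_mul, Matrix.mul_one, kz, kw]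
    have h := hW.mul_mul_conjTranspose_same (herPow hz.1 (r/2))
    rwa [(herPow_isHermitian hz.1 (r/2)).eq, key] at h

lemma re_trace_nonneg (h : M.PosSemidef) : 0 ≤ M.trace.re := by
  have hd : ∀ i, 0 ≤ (M i i).re := by
    intro i
    have e1 : star (Pi.single i (1:ℂ) : Fin d → ℂ) = Pi.single i 1 := by
      funext j
      rcases eq_or_ne j i with rfl | hne <;> simp [Pi.single_apply, *]
    have h2 := h.re_dotProduct_nonneg (Pi.single i 1)
    rw [e1, Matrix.mulVec_single, single_dotProduct] at h2
    simpa [RCLike.re_to_complex] using h2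
  rw [Matrix.trace]
  rw [Complex.re_sum]
  exact Finset.sum_nonneg fun i _ => hd i

end final

/-- For `0 ≤ y ≤ z`, `z` positive definite and `1 < α ≤ 2`,
`τ(z^{(1−α)/2}(z^α − y^α)z^{(1−α)/2}) ≤ 2 τ(z − y)`. -/
theorem stmt2 {d : ℕ} (α : ℝ) (hα1 : 1 < α) (hα2 : α ≤ 2)
    (y z : Matrix (Fin d) (Fin d) ℂ) (hy : y.PosSemidef) (hz : z.PosDef)
    (hyz : (z - y).PosSemidef) :
    ((herPow hz.1 ((1 - α) / 2) * (herPow hz.1 α - herPow hy.1 α) *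
        herPow hz.1 ((1 - α) / 2)).trace).re
      ≤ 2 * ((z - y).trace).re := by
  set A := herPow hy.1 (α/2) * herPow hz.1 ((1-α)/2) with hAdef
  set B := herPow hy.1 ((2-α)/2) * herPow hz.1 ((α-1)/2) with hBdef
  have hAH : Aᴴ = herPow hz.1 ((1-α)/2) * herPow hy.1 (α/2) := by
    rw [hAdef, Matrix.conjTranspose_mul, (herPow_isHermitian hy.1 _).eq,
      (herPow_isHermitian hz.1 _).eq]
  have hBH : Bᴴ = herPow hz.1 ((α-1)/2) * herPow hy.1 ((2-α)/2) := by
    rw [hBdef, Matrix.conjTranspose_mul, (herPow_isHermitian hy.1 _).eq,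
      (herPow_isHermitian hz.1 _).eq]
  have hy2 : herPow hy.1 (α/2) * herPow hy.1 (α/2) = herPow hy.1 α := by
    rw [yp_mul hy (by linarith) (by linarith), herPow_congr hy.1 (show α/2 + α/2 = α by ring)]
  have hy2' : herPow hy.1 ((2-α)/2) * herPow hy.1 ((2-α)/2) = herPow hy.1 (2-α) := by
    rw [yp_mul hy (by linarith) (by linarith),
      herPow_congr hy.1 (show (2-α)/2 + (2-α)/2 = 2-α by ring)]
  have hy22 : herPow hy.1 (α/2) * herPow hy.1 ((2-α)/2) = y := by
    rw [yp_mul hy (by linarith) (by linarith),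
      herPow_congr hy.1 (show α/2 + (2-α)/2 = 1 by ring), herPow_one]
  have hAA : Aᴴ * A = herPow hz.1 ((1-α)/2) * herPow hy.1 α * herPow hz.1 ((1-α)/2) := by
    calc Aᴴ * A = herPow hz.1 ((1-α)/2) * herPow hy.1 (α/2) *
          (herPow hy.1 (α/2) * herPow hz.1 ((1-α)/2)) := by rw [hAH, hAdef]
      _ = herPow hz.1 ((1-α)/2) * (herPow hy.1 (α/2) * herPow hy.1 (α/2)) *
          herPow hz.1 ((1-α)/2) := by simp only [mul_assoc]
      _ = _ := by rw [hy2]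
  have hBB : Bᴴ * B = herPow hz.1 ((α-1)/2) * herPow hy.1 (2-α) * herPow hz.1 ((α-1)/2) := by
    calc Bᴴ * B = herPow hz.1 ((α-1)/2) * herPow hy.1 ((2-α)/2) *
          (herPow hy.1 ((2-α)/2) * herPow hz.1 ((α-1)/2)) := by rw [hBH, hBdef]
      _ = herPow hz.1 ((α-1)/2) * (herPow hy.1 ((2-α)/2) * herPow hy.1 ((2-α)/2)) *
          herPow hz.1 ((α-1)/2) := by simp only [mul_assoc]
      _ = _ := by rw [hy2']
  have hAB : Aᴴ * B = herPow hz.1 ((1-α)/2) * (y * herPow hz.1 ((α-1)/2)) := by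
    calc Aᴴ * B = herPow hz.1 ((1-α)/2) * herPow hy.1 (α/2) *
          (herPow hy.1 ((2-α)/2) * herPow hz.1 ((α-1)/2)) := by rw [hAH, hBdef]
      _ = herPow hz.1 ((1-α)/2) * ((herPow hy.1 (α/2) * herPow hy.1 ((2-α)/2)) *
          herPow hz.1 ((α-1)/2)) := by simp only [mul_assoc]
      _ = _ := by rw [hy22]
  have htab : (Aᴴ * B).trace = y.trace := by
    rw [hAB, Matrix.trace_mul_comm, mul_assoc, zp_mul hz,
      herPow_congr hz.1 (show (α-1)/2 + (1-α)/2 = 0 by ring), herPow_zero, mul_one]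
  have hba : ((Bᴴ * A).trace).re = (y.trace).re := by
    have h1 : (Aᴴ * B)ᴴ = Bᴴ * A := by
      rw [Matrix.conjTranspose_mul, Matrix.conjTranspose_conjTranspose]
    rw [← h1, Matrix.trace_conjTranspose, htab]
    exact Complex.conj_re _
  have hab : ((Aᴴ * B).trace).re = (y.trace).re := by rw [htab]
  have hZZ : herPow hz.1 ((1-α)/2) * herPow hz.1 α * herPow hz.1 ((1-α)/2) = z := by
    rw [zp_mul hz, zp_mul hz, herPow_congr hz.1 (show (1-α)/2 + α + (1-α)/2 = 1 by ring),
      herPow_one]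
  have hZZ2 : herPow hz.1 ((α-1)/2) * herPow hz.1 (2-α) * herPow hz.1 ((α-1)/2) = z := by
    rw [zp_mul hz, zp_mul hz, herPow_congr hz.1 (show (α-1)/2 + (2-α) + (α-1)/2 = 1 by ring),
      herPow_one]
  have hLHS : herPow hz.1 ((1-α)/2) * (herPow hz.1 α - herPow hy.1 α) *
      herPow hz.1 ((1-α)/2) = z - Aᴴ * A := by
    rw [Matrix.mul_sub, Matrix.sub_mul, hZZ, hAA]
  have hCS : 0 ≤ ((Aᴴ*A).trace).re + ((Bᴴ*B).trace).re - 2 * (y.trace).re := by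
    have hpsd := Matrix.posSemidef_conjTranspose_mul_self (A - B)
    have h0 := re_trace_nonneg hpsd
    have hexp : (A - B)ᴴ * (A - B) = Aᴴ*A - Aᴴ*B - Bᴴ*A + Bᴴ*B := by
      rw [Matrix.conjTranspose_sub]
      noncomm_ring
    rw [hexp, Matrix.trace_add, Matrix.trace_sub, Matrix.trace_sub, Complex.add_re,
      Complex.sub_re, Complex.sub_re, hab, hba] at h0
    linarith
  have hLH1 : 0 ≤ (z.trace).re - ((Bᴴ*B).trace).re := by
    have hLH0 : (herPow hz.1 (2-α) - herPow hy.1 (2-α)).PosSemidef :=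
      loewner_heinz hy hz hyz (by linarith) (by linarith)
    have h := hLH0.mul_mul_conjTranspose_same (herPow hz.1 ((α-1)/2))
    rw [(herPow_isHermitian hz.1 _).eq] at h
    have hexp : herPow hz.1 ((α-1)/2) * (herPow hz.1 (2-α) - herPow hy.1 (2-α)) *
        herPow hz.1 ((α-1)/2) = z - Bᴴ*B := by
      rw [Matrix.mul_sub, Matrix.sub_mul, hZZ2, hBB]
    rw [hexp] at h
    have h2 := re_trace_nonneg h
    rwa [Matrix.trace_sub, Complex.sub_re] at h2
  rw [hLHS, Matrix.trace_sub, Complex.sub_re, Matrix.trace_sub, Complex.sub_re]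
  linarith
end base
end

section
/- Let (b_n)_{1≤n≤N} be positive semidefinite d×d matrices and (c_k)_{1≤k≤N+1} positive semidefinite d×d matrices. Define z_n = Σ_{k>n} c_k for 0 ≤ n ≤ N. Then the N×N block matrix Z whose (n,m) entry is b_n^{1/2} z_{max(n,m)} b_m^{1/2} is positive semidefinite. -/
open Matrix
open scoped ComplexOrder

/-- The positive semidefinite square root of a positive semidefinite matrix
(definition as in Mathlib of December 2024, since removed). -/
noncomputable def Matrix.PosSemidef.sqrt {n 𝕜 : Type*} [Fintype n] [RCLike 𝕜] [DecidableEq n]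
    {A : Matrix n n 𝕜} (hA : A.PosSemidef) : Matrix n n 𝕜 :=
  hA.1.eigenvectorUnitary.1 * diagonal ((↑) ∘ Real.sqrt ∘ hA.1.eigenvalues) *
  (star hA.1.eigenvectorUnitary : Matrix n n 𝕜)

lemma Matrix.PosSemidef.posSemidef_sqrt {n 𝕜 : Type*} [Fintype n] [RCLike 𝕜] [DecidableEq n]
    {A : Matrix n n 𝕜} (hA : A.PosSemidef) : hA.sqrt.PosSemidef := by
  unfold Matrix.PosSemidef.sqrt
  have h := (Matrix.PosSemidef.diagonal (R := 𝕜) (n := n)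
    (d := ((↑) ∘ Real.sqrt ∘ hA.1.eigenvalues)) (fun i => by
      simp only [Function.comp_apply]
      exact RCLike.ofReal_nonneg.mpr (Real.sqrt_nonneg _))).mul_mul_conjTranspose_same
    (hA.1.eigenvectorUnitary.1)
  simpa [Matrix.star_eq_conjTranspose] using h

lemma Matrix.PosSemidef.sqrt_mul_self {n 𝕜 : Type*} [Fintype n] [RCLike 𝕜] [DecidableEq n]
    {A : Matrix n n 𝕜} (hA : A.PosSemidef) : hA.sqrt * hA.sqrt = A := by
  unfold Matrix.PosSemidef.sqrt
  have hU : (star hA.1.eigenvectorUnitary : Matrix n n 𝕜) * hA.1.eigenvectorUnitary.1 = 1 :=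
    Matrix.mem_unitaryGroup_iff'.mp hA.1.eigenvectorUnitary.2
  have hD : diagonal (((↑) : ℝ → 𝕜) ∘ Real.sqrt ∘ hA.1.eigenvalues) *
      diagonal ((↑) ∘ Real.sqrt ∘ hA.1.eigenvalues) =
      diagonal (RCLike.ofReal ∘ hA.1.eigenvalues) := by
    rw [Matrix.diagonal_mul_diagonal]
    congr 1
    funext i
    simp only [Function.comp_apply]
    rw [← RCLike.ofReal_mul, Real.mul_self_sqrt (hA.eigenvalues_nonneg i)]
  conv_rhs => rw [hA.1.spectral_theorem]
  calc _ = hA.1.eigenvectorUnitary.1 * diagonal (((↑) : ℝ → 𝕜) ∘ Real.sqrt ∘ hA.1.eigenvalues) *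
      ((star hA.1.eigenvectorUnitary : Matrix n n 𝕜) * hA.1.eigenvectorUnitary.1) *
      diagonal ((↑) ∘ Real.sqrt ∘ hA.1.eigenvalues) *
      (star hA.1.eigenvectorUnitary : Matrix n n 𝕜) := by simp only [Matrix.mul_assoc]
    _ = _ := by
      rw [hU, Matrix.mul_one, Matrix.mul_assoc _ (diagonal _) (diagonal _), hD]
      simp [Unitary.conjStarAlgAut_apply]

/-- Positivity of the block matrix `Z = [b_n^{1/2} z_{max(n,m)} b_m^{1/2}]` where
`z_n = Σ_{k>n} c_k` with all `b_n`, `c_k` positive semidefinite. -/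
theorem stmt3 (d N K : ℕ) (b : Fin N → Matrix (Fin d) (Fin d) ℂ)
    (hb : ∀ n, (b n).PosSemidef)
    (c : ℕ → Matrix (Fin d) (Fin d) ℂ) (hc : ∀ k, (c k).PosSemidef)
    (z : ℕ → Matrix (Fin d) (Fin d) ℂ) (hz : ∀ n, z n = ∑ k ∈ Finset.Ioc n K, c k) :
    Matrix.PosSemidef (Matrix.of fun p q : Fin N × Fin d =>
      ((hb p.1).sqrt * z (max (p.1 : ℕ) (q.1 : ℕ)) * (hb q.1).sqrt) p.2 q.2) := by
  set T : ℕ → Matrix (Fin d) (Fin N × Fin d) ℂ := fun k =>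
    Matrix.of fun i p => if (p.1 : ℕ) < k then ((hc k).sqrt * (hb p.1).sqrt) i p.2 else 0
    with hT
  have key : (Matrix.of fun p q : Fin N × Fin d =>
      ((hb p.1).sqrt * z (max (p.1 : ℕ) (q.1 : ℕ)) * (hb q.1).sqrt) p.2 q.2)
      = ∑ k ∈ Finset.range (K+1), (T k)ᴴ * (T k) := by
    ext ⟨n, i⟩ ⟨m, j⟩
    rw [Matrix.sum_apply]
    have hexp : ∀ k, ((T k)ᴴ * (T k)) (n, i) (m, j)
        = ∑ x, star (T k x (n, i)) * T k x (m, j) := by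
      intro k
      rw [Matrix.mul_apply]
      simp only [Matrix.conjTranspose_apply]
    have hentry : ∀ k, ((T k)ᴴ * (T k)) (n, i) (m, j)
        = if (n : ℕ) < k ∧ (m : ℕ) < k
            then ((hb n).sqrt * c k * (hb m).sqrt) i j else 0 := by
      intro k
      rw [hexp]
      by_cases hn : (n : ℕ) < k
      · by_cases hm : (m : ℕ) < k
        · rw [if_pos ⟨hn, hm⟩]
          have hTn : ∀ x : Fin d, T k x (n, i) = ((hc k).sqrt * (hb n).sqrt) x i := by
            intro x; simp [hT, hn]
          have hTm : ∀ x : Fin d, T k x (m, j) = ((hc k).sqrt * (hb m).sqrt) x j := by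
            intro x; simp [hT, hm]
          simp only [hTn, hTm]
          have h1 : (∑ x, star (((hc k).sqrt * (hb n).sqrt) x i) *
                (((hc k).sqrt * (hb m).sqrt) x j))
              = (((hc k).sqrt * (hb n).sqrt)ᴴ * ((hc k).sqrt * (hb m).sqrt)) i j := by
            rw [Matrix.mul_apply]
            simp only [Matrix.conjTranspose_apply]
          rw [h1, Matrix.conjTranspose_mul, (hb n).posSemidef_sqrt.1, (hc k).posSemidef_sqrt.1]
          rw [show (hb n).sqrt * (hc k).sqrt * ((hc k).sqrt * (hb m).sqrt)
                = (hb n).sqrt * ((hc k).sqrt * (hc k).sqrt) * (hb m).sqrt by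
              simp only [mul_assoc], (hc k).sqrt_mul_self]
        · have hTm : ∀ x : Fin d, T k x (m, j) = 0 := by intro x; simp [hT, hm]
          simp [hTm, hn, hm]
      · have hTn : ∀ x : Fin d, T k x (n, i) = 0 := by intro x; simp [hT, hn]
        simp [hTn, hn]
    simp only [hentry]
    rw [Finset.sum_ite, Finset.sum_const_zero, add_zero]
    have hfilt : (Finset.range (K+1)).filter (fun k => (n : ℕ) < k ∧ (m : ℕ) < k)
        = Finset.Ioc (max (n : ℕ) (m : ℕ)) K := by
      ext k
      simp [Finset.mem_Ioc, Nat.lt_succ_iff, max_lt_iff, and_comm, and_left_comm]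
    rw [hfilt, Matrix.of_apply, hz, Matrix.mul_sum, Matrix.sum_mul, Matrix.sum_apply]
  rw [key]
  refine Finset.sum_induction _ _ (fun A B hA hB => hA.add hB) ?_ ?_
  · exact Matrix.PosSemidef.zero
  · intro k _
    exact Matrix.posSemidef_conjTranspose_mul_self (T k)
end

section
/- Let (Ω, 𝒜, μ) be a probability space with filtration (𝒜_n)_{n≥1} and a ∈ L²(Ω). Define ‖a‖_{BMO^c}² = sup_n ‖E_n(|a − E_{n−1}a|²)‖_∞, ‖a‖_{bmo^c}² = max(‖E_1 a‖_∞², sup_n ‖E_n(|a − E_n a|²)‖_∞), and ‖a‖_{bmo^d} = sup_n ‖da_n‖_∞. Then max(‖a‖_{bmo^c}, ‖a‖_{bmo^d}) ≤ ‖a‖_{BMO^c} ≤ √2 · max(‖a‖_{bmo^c}, ‖a‖_{bmo^d}). -/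
open scoped ENNReal
open MeasureTheory

section helpers
variable {α : Type*} {m m0 : MeasurableSpace α} {μ : Measure α}

lemma my_essSup_sq (g : α → ℝ≥0∞) : essSup (fun x => g x ^ 2) μ = (essSup g μ) ^ 2 := by
  have h := OrderIso.essSup_apply (γ := ℝ≥0∞) g μ (ENNReal.orderIsoRpow 2 (by norm_num))
  simp only [ENNReal.orderIsoRpow_apply] at h
  have h2 : ∀ x : ℝ≥0∞, x ^ (2 : ℝ) = x ^ (2 : ℕ) := fun x => by
    rw [← ENNReal.rpow_natCast]; norm_num
  simp only [h2] at h
  exact h.symm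

lemma my_eLpNorm_top_sq (μ : Measure α) (f : α → ℝ) :
    eLpNorm (fun ω => f ω ^ 2) ⊤ μ = (eLpNorm f ⊤ μ) ^ 2 := by
  rw [eLpNorm_exponent_top, eLpNorm_exponent_top, eLpNormEssSup, eLpNormEssSup]
  simp only [enorm_pow]
  exact my_essSup_sq _

lemma my_integrable_mul {f g : α → ℝ} (hf : MemLp f 2 μ) (hg : MemLp g 2 μ) :
    Integrable (fun ω => f ω * g ω) μ := by
  have h1 : Integrable (fun ω => (f ω + g ω) ^ 2) μ := (hf.add hg).integrable_sq
  have h : Integrable (fun ω =>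
      (((f ω + g ω) ^ 2 - f ω ^ 2) - g ω ^ 2) * (1 / 2)) μ :=
    ((h1.sub hf.integrable_sq).sub hg.integrable_sq).mul_const _
  refine h.congr (Filter.Eventually.of_forall fun ω => ?_)
  ring

lemma my_memℒp_two_condexp (hm : m ≤ m0) [IsFiniteMeasure μ] {f : α → ℝ}
    (hf : MemLp f 2 μ) : MemLp (μ[f|m]) 2 μ := by
  have heq : (condExpL2 ℝ ℝ hm (hf.toLp f) : α → ℝ) =ᵐ[μ] μ[f|m] := by
    refine ae_eq_condExp_of_forall_setIntegral_eq hm (hf.integrable one_le_two) ?_ ?_ ?_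
    · intro s _ hμs
      exact integrableOn_Lp_of_measure_ne_top _ fact_one_le_two_ennreal.elim hμs.ne
    · intro s hs hμs
      rw [integral_condExpL2_eq hm (hf.toLp f) hs hμs.ne]
      exact setIntegral_congr_ae (hm s hs) ((hf.coeFn_toLp).mono fun x hx _ => hx)
    · exact aestronglyMeasurable_condExpL2 hm _
  exact (Lp.memLp _).ae_eq heq

lemma my_condexp_sq_add (hm : m ≤ m0) [IsProbabilityMeasure μ] {c d : α → ℝ}
    (hc : MemLp c 2 μ) (hd : MemLp d 2 μ) (hdm : StronglyMeasurable[m] d)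
    (hc0 : μ[c|m] =ᵐ[μ] 0) :
    μ[fun ω => (c ω + d ω) ^ 2|m] =ᵐ[μ]
      μ[fun ω => c ω ^ 2|m] + fun ω => d ω ^ 2 := by
  haveI : SigmaFinite (μ.trim hm) := inferInstance
  have hint_c2 : Integrable (fun ω => c ω ^ 2) μ := hc.integrable_sq
  have hint_d2 : Integrable (fun ω => d ω ^ 2) μ := hd.integrable_sq
  have hint_dc : Integrable (fun ω => (2 * d ω) * c ω) μ := by
    have := (my_integrable_mul hd hc).const_mul 2
    refine this.congr (Filter.Eventually.of_forall fun ω => ?_); ring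
  have hfun : (fun ω => (c ω + d ω) ^ 2) =
      (fun ω => c ω ^ 2) + ((fun ω => (2 * d ω) * c ω) + fun ω => d ω ^ 2) := by
    funext ω; simp only [Pi.add_apply]; ring
  rw [hfun]
  have h1 := condExp_add (m := m) hint_c2 (hint_dc.add hint_d2)
  refine h1.trans ?_
  have h2 := condExp_add (m := m) hint_dc hint_d2
  have h3 : μ[fun ω => (2 * d ω) * c ω|m] =ᵐ[μ] 0 := by
    have hpull := condExp_mul_of_stronglyMeasurable_left (μ := μ) (hdm.const_mul 2)
      (by exact hint_dc) (hc.integrable one_le_two)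
    refine hpull.trans ?_
    filter_upwards [hc0] with ω hω
    simp [hω]
  have h4 : μ[fun ω => d ω ^ 2|m] = fun ω => d ω ^ 2 :=
    condExp_of_stronglyMeasurable hm (hdm.pow 2) hint_d2
  filter_upwards [h2, h3] with ω h2ω h3ω
  simp only [Pi.add_apply] at h2ω h3ω ⊢
  rw [h2ω, h3ω, h4]
  simp

end helpers

/-- Comparison of the (squared) `BMO^c` norm with the maximum of the (squared)
`bmo^c` and `bmo^d` norms:
`max(‖a‖_{bmo^c}, ‖a‖_{bmo^d}) ≤ ‖a‖_{BMO^c} ≤ √2 max(‖a‖_{bmo^c}, ‖a‖_{bmo^d})`,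
stated with squared quantities in `ℝ≥0∞`. -/
theorem stmt7 {Ω : Type*} {m0 : MeasurableSpace Ω} (μ : Measure Ω) [IsProbabilityMeasure μ]
    (ℱ : Filtration ℕ m0) (a : Ω → ℝ) (ha : MemLp a 2 μ)
    (A : ℕ → Ω → ℝ) (hA0 : A 0 = 0) (hA : ∀ n, 1 ≤ n → A n = μ[a|ℱ n])
    (BMOcSq bmocSq bmodSq : ℝ≥0∞)
    (hBMOc : BMOcSq = ⨆ n : ℕ, eLpNorm (μ[fun ω => (a ω - A n ω) ^ 2|ℱ (n + 1)]) ⊤ μ)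
    (hbmoc : bmocSq = max ((eLpNorm (μ[a|ℱ 1]) ⊤ μ) ^ 2)
      (⨆ n : ℕ, eLpNorm (μ[fun ω => (a ω - A (n + 1) ω) ^ 2|ℱ (n + 1)]) ⊤ μ))
    (hbmod : bmodSq = ⨆ n : ℕ, (eLpNorm (fun ω => A (n + 1) ω - A n ω) ⊤ μ) ^ 2) :
    max bmocSq bmodSq ≤ BMOcSq ∧ BMOcSq ≤ 2 * max bmocSq bmodSq := by
  -- basic facts about A
  have hAmem : ∀ n, MemLp (A n) 2 μ := by
    intro n
    cases n with
    | zero => rw [hA0]; exact MemLp.zero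
    | succ n => rw [hA (n + 1) (Nat.le_add_left 1 n)]; exact my_memℒp_two_condexp (ℱ.le _) ha
  have hAsm : ∀ n, StronglyMeasurable[ℱ n] (A n) := by
    intro n
    cases n with
    | zero => rw [hA0]; exact stronglyMeasurable_const
    | succ n => rw [hA (n + 1) (Nat.le_add_left 1 n)]; exact stronglyMeasurable_condExp
  have hconde : ∀ n : ℕ, μ[a|ℱ (n + 1)] = A (n + 1) :=
    fun n => (hA (n + 1) (Nat.le_add_left 1 n)).symm
  -- the key decomposition
  have key : ∀ n : ℕ, μ[fun ω => (a ω - A n ω) ^ 2|ℱ (n + 1)] =ᵐ[μ]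
      μ[fun ω => (a ω - A (n + 1) ω) ^ 2|ℱ (n + 1)] + fun ω => (A (n + 1) ω - A n ω) ^ 2 := by
    intro n
    have hc : MemLp (fun ω => a ω - A (n + 1) ω) 2 μ := ha.sub (hAmem (n + 1))
    have hd : MemLp (fun ω => A (n + 1) ω - A n ω) 2 μ := (hAmem (n + 1)).sub (hAmem n)
    have hdm : StronglyMeasurable[ℱ (n + 1)] (fun ω => A (n + 1) ω - A n ω) :=
      (hAsm (n + 1)).sub ((hAsm n).mono (ℱ.mono n.le_succ))
    have hc0 : μ[fun ω => a ω - A (n + 1) ω|ℱ (n + 1)] =ᵐ[μ] 0 := by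
      have h1 := condExp_sub (m := ℱ (n + 1)) (ha.integrable one_le_two)
        ((hAmem (n + 1)).integrable one_le_two)
      have h2 : μ[A (n + 1)|ℱ (n + 1)] = A (n + 1) :=
        condExp_of_stronglyMeasurable (ℱ.le _) (hAsm (n + 1))
          ((hAmem (n + 1)).integrable one_le_two)
      refine h1.trans ?_
      rw [hconde n, h2]
      simp
    have hfun : (fun ω => (a ω - A n ω) ^ 2) =
        fun ω => ((a ω - A (n + 1) ω) + (A (n + 1) ω - A n ω)) ^ 2 := by
      funext ω; ring
    rw [hfun]
    exact my_condexp_sq_add (ℱ.le _) hc hd hdm hc0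
  -- nonnegativity
  have hYpos : ∀ n : ℕ, 0 ≤ᵐ[μ] μ[fun ω => (a ω - A (n + 1) ω) ^ 2|ℱ (n + 1)] :=
    fun n => condExp_nonneg (Filter.Eventually.of_forall fun ω => sq_nonneg _)
  -- norm comparisons
  have hYle : ∀ n : ℕ, eLpNorm (μ[fun ω => (a ω - A (n + 1) ω) ^ 2|ℱ (n + 1)]) ⊤ μ ≤
      eLpNorm (μ[fun ω => (a ω - A n ω) ^ 2|ℱ (n + 1)]) ⊤ μ := by
    intro n
    refine eLpNorm_mono_ae ?_
    filter_upwards [key n, hYpos n] with ω hk hy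
    simp only [Pi.add_apply] at hk
    have hy' : (0:ℝ) ≤ (μ[fun ω => (a ω - A (n + 1) ω) ^ 2|ℱ (n + 1)]) ω := hy
    have hD : (0:ℝ) ≤ (A (n + 1) ω - A n ω) ^ 2 := sq_nonneg _
    rw [hk, Real.norm_eq_abs, Real.norm_eq_abs, abs_of_nonneg hy',
      abs_of_nonneg (add_nonneg hy' hD)]
    linarith
  have hDle : ∀ n : ℕ, eLpNorm (fun ω => (A (n + 1) ω - A n ω) ^ 2) ⊤ μ ≤
      eLpNorm (μ[fun ω => (a ω - A n ω) ^ 2|ℱ (n + 1)]) ⊤ μ := by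
    intro n
    refine eLpNorm_mono_ae ?_
    filter_upwards [key n, hYpos n] with ω hk hy
    simp only [Pi.add_apply] at hk
    have hy' : (0:ℝ) ≤ (μ[fun ω => (a ω - A (n + 1) ω) ^ 2|ℱ (n + 1)]) ω := hy
    have hD : (0:ℝ) ≤ (A (n + 1) ω - A n ω) ^ 2 := sq_nonneg _
    rw [hk, Real.norm_eq_abs, Real.norm_eq_abs, abs_of_nonneg hD,
      abs_of_nonneg (add_nonneg hy' hD)]
    linarith
  have hXle : ∀ n : ℕ, eLpNorm (μ[fun ω => (a ω - A n ω) ^ 2|ℱ (n + 1)]) ⊤ μ ≤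
      eLpNorm (μ[fun ω => (a ω - A (n + 1) ω) ^ 2|ℱ (n + 1)]) ⊤ μ +
        eLpNorm (fun ω => (A (n + 1) ω - A n ω) ^ 2) ⊤ μ := by
    intro n
    rw [eLpNorm_congr_ae (key n)]
    refine eLpNorm_add_le ?_ ?_ le_top
    · exact (stronglyMeasurable_condExp.mono (ℱ.le _)).aestronglyMeasurable
    · exact (((hAmem (n + 1)).sub (hAmem n)).aestronglyMeasurable).pow 2
  -- relation between squared eLpNorm of increments
  have hDsq : ∀ n : ℕ, eLpNorm (fun ω => (A (n + 1) ω - A n ω) ^ 2) ⊤ μ =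
      (eLpNorm (fun ω => A (n + 1) ω - A n ω) ⊤ μ) ^ 2 := fun n => my_eLpNorm_top_sq μ _
  subst hBMOc hbmoc hbmod
  constructor
  · refine max_le (max_le ?_ ?_) ?_
    · -- ‖E₁ a‖² ≤ BMOc
      rw [hconde 0]
      rw [← my_eLpNorm_top_sq μ (A 1)]
      have heq : (fun ω => A 1 ω ^ 2) = fun ω => (A 1 ω - A 0 ω) ^ 2 := by
        funext ω; rw [hA0]; simp
      rw [heq]
      exact (hDle 0).trans (le_iSup (fun n => eLpNorm (μ[fun ω => (a ω - A n ω) ^ 2|ℱ (n + 1)]) ⊤ μ) 0)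
    · exact iSup_le fun n => (hYle n).trans
        (le_iSup (fun n => eLpNorm (μ[fun ω => (a ω - A n ω) ^ 2|ℱ (n + 1)]) ⊤ μ) n)
    · refine iSup_le fun n => ?_
      rw [← hDsq n]
      exact (hDle n).trans
        (le_iSup (fun n => eLpNorm (μ[fun ω => (a ω - A n ω) ^ 2|ℱ (n + 1)]) ⊤ μ) n)
  · refine iSup_le fun n => (hXle n).trans ?_
    rw [two_mul]
    gcongr
    · exact le_trans (le_trans
        (le_iSup (fun n => eLpNorm (μ[fun ω => (a ω - A (n + 1) ω) ^ 2|ℱ (n + 1)]) ⊤ μ) n)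
        (le_max_right _ _)) (le_max_left _ _)
    · rw [hDsq n]
      exact le_trans
        (le_iSup (fun n => (eLpNorm (fun ω => A (n + 1) ω - A n ω) ⊤ μ) ^ 2) n)
        (le_max_right _ _)
end

section
/- Let H be a complex Hilbert space, let c_1, …, c_K be bounded positive operators on H, and for 0 ≤ n define z_n = Σ_{k>n} c_k. Then for any vectors η_1, …, η_N ∈ H, Σ_{n,m=1}^N ⟨z_{max(n,m)} η_m, η_n⟩ = Σ_{k=1}^K ⟨c_k (Σ_{m<k} η_m), Σ_{n<k} η_n⟩ ≥ 0; in particular the N×N matrix with entries ⟨z_{max(n,m)} η_m, η_n⟩ is positive semidefinite. -/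
open scoped ComplexOrder

lemma posInner {H : Type*} [NormedAddCommGroup H] [InnerProductSpace ℂ H] [CompleteSpace H]
    {T : H →L[ℂ] H} (hT : T.IsPositive) (v : H) : 0 ≤ (inner ℂ v (T v) : ℂ) := by
  have hre : 0 ≤ RCLike.re (inner ℂ v (T v) : ℂ) := (Complex.nonneg_iff.mp (hT.inner_nonneg_right v)).1
  have hsym := (ContinuousLinearMap.isSelfAdjoint_iff_isSymmetric.mp hT.isSelfAdjoint) v v
  have him : (inner ℂ v (T v) : ℂ) = starRingEnd ℂ (inner ℂ v (T v) : ℂ) := by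
    rw [inner_conj_symm]; exact hsym.symm
  rw [Complex.nonneg_iff]
  constructor
  · simpa using hre
  · have h2 := congrArg Complex.im him
    simp only [Complex.conj_im] at h2
    linarith

lemma keyEq {H : Type*} [NormedAddCommGroup H] [InnerProductSpace ℂ H] [CompleteSpace H]
    (K N : ℕ) (c : ℕ → H →L[ℂ] H)
    (z : ℕ → H →L[ℂ] H) (hz : ∀ n, z n = ∑ k ∈ Finset.Ioc n K, c k)
    (η : ℕ → H) :
    ∑ n ∈ Finset.Icc 1 N, ∑ m ∈ Finset.Icc 1 N,
        (inner ℂ (η n) (z (max n m) (η m)) : ℂ)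
      = ∑ k ∈ Finset.Icc 1 K,
          (inner ℂ (∑ n ∈ (Finset.Icc 1 N).filter (· < k), η n)
            (c k (∑ m ∈ (Finset.Icc 1 N).filter (· < k), η m)) : ℂ) := by
  have step1 : ∀ n ∈ Finset.Icc 1 N, ∀ m ∈ Finset.Icc 1 N,
      (inner ℂ (η n) (z (max n m) (η m)) : ℂ)
        = ∑ k ∈ Finset.Icc 1 K, if max n m < k then (inner ℂ (η n) (c k (η m)) : ℂ) else 0 := by
    intro n hn m hm
    rw [hz, ContinuousLinearMap.sum_apply, inner_sum, ← Finset.sum_filter]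
    apply Finset.sum_congr _ (fun _ _ => rfl)
    ext k
    simp only [Finset.mem_Ioc, Finset.mem_filter, Finset.mem_Icc]
    simp only [Finset.mem_Icc] at hn
    omega
  rw [Finset.sum_congr rfl (fun n hn => Finset.sum_congr rfl (fun m hm => step1 n hn m hm))]
  have swap1 : ∀ n : ℕ, ∑ m ∈ Finset.Icc 1 N, ∑ k ∈ Finset.Icc 1 K,
      (if max n m < k then (inner ℂ (η n) (c k (η m)) : ℂ) else 0)
      = ∑ k ∈ Finset.Icc 1 K, ∑ m ∈ Finset.Icc 1 N,
      (if max n m < k then (inner ℂ (η n) (c k (η m)) : ℂ) else 0) := fun n => Finset.sum_comm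
  rw [Finset.sum_congr rfl (fun n _ => swap1 n), Finset.sum_comm]
  refine Finset.sum_congr rfl fun k _ => ?_
  rw [map_sum, inner_sum]
  rw [Finset.sum_congr rfl (fun m (_ : m ∈ _) => (sum_inner _ _ _ :
    (inner ℂ (∑ n ∈ (Finset.Icc 1 N).filter (· < k), η n) (c k (η m)) : ℂ) = _)), Finset.sum_comm]
  simp only [Finset.sum_filter]
  refine Finset.sum_congr rfl fun n _ => ?_
  by_cases h : n < k
  · simp [h, Nat.max_lt]
  · simp [h, Nat.max_lt]

/-- Abstract Hilbert space positivity: with `z_n = Σ_{k>n} c_k` for positive operators `c_k`,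
`Σ_{n,m} ⟨η_n, z_{max(n,m)} η_m⟩ = Σ_k ⟨Σ_{n<k} η_n, c_k(Σ_{m<k} η_m)⟩ ≥ 0`, and the matrix
with entries `⟨η_n, z_{max(n,m)} η_m⟩` is positive semidefinite. -/
theorem stmt18 {H : Type*} [NormedAddCommGroup H] [InnerProductSpace ℂ H] [CompleteSpace H]
    (K N : ℕ) (c : ℕ → H →L[ℂ] H) (hc : ∀ k, (c k).IsPositive)
    (z : ℕ → H →L[ℂ] H) (hz : ∀ n, z n = ∑ k ∈ Finset.Ioc n K, c k)
    (η : ℕ → H) :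
    (∑ n ∈ Finset.Icc 1 N, ∑ m ∈ Finset.Icc 1 N,
        (inner ℂ (η n) (z (max n m) (η m)) : ℂ)
      = ∑ k ∈ Finset.Icc 1 K,
          (inner ℂ (∑ n ∈ (Finset.Icc 1 N).filter (· < k), η n)
            (c k (∑ m ∈ (Finset.Icc 1 N).filter (· < k), η m)) : ℂ)) ∧
    (0 ≤ ∑ n ∈ Finset.Icc 1 N, ∑ m ∈ Finset.Icc 1 N,
        (inner ℂ (η n) (z (max n m) (η m)) : ℂ)) ∧
    Matrix.PosSemidef (Matrix.of fun i j : Fin N =>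
      (inner ℂ (η ((i : ℕ) + 1)) (z (max ((i : ℕ) + 1) ((j : ℕ) + 1)) (η ((j : ℕ) + 1))) : ℂ)) := by
  have keyNonneg : ∀ η' : ℕ → H, 0 ≤ ∑ n ∈ Finset.Icc 1 N, ∑ m ∈ Finset.Icc 1 N,
      (inner ℂ (η' n) (z (max n m) (η' m)) : ℂ) := by
    intro η'
    rw [keyEq K N c z hz η']
    exact Finset.sum_nonneg fun k _ => posInner (hc k) _
  have hzsa : ∀ s, IsSelfAdjoint (z s) := by
    intro s
    rw [hz, IsSelfAdjoint, star_sum]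
    exact Finset.sum_congr rfl fun k _ => (hc k).isSelfAdjoint.star_eq
  refine ⟨keyEq K N c z hz η, keyNonneg η, Matrix.PosSemidef.of_dotProduct_mulVec_nonneg ?_ ?_⟩
  · -- Hermitian
    ext i j
    have hsymm := ContinuousLinearMap.isSelfAdjoint_iff_isSymmetric.mp
      (hzsa (max ((i : ℕ) + 1) ((j : ℕ) + 1)))
    simp only [Matrix.conjTranspose_apply, Matrix.of_apply, RCLike.star_def, inner_conj_symm]
    rw [max_comm]
    exact hsymm _ _
  · -- quadratic form
    intro x
    set ξ : ℕ → ℂ := fun n => if h : n - 1 < N then x ⟨n - 1, h⟩ else 0 with hξ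
    have key := keyNonneg (fun n => ξ n • η n)
    have heq : dotProduct (star x) (Matrix.mulVec (Matrix.of fun i j : Fin N =>
        (inner ℂ (η ((i : ℕ) + 1)) (z (max ((i : ℕ) + 1) ((j : ℕ) + 1)) (η ((j : ℕ) + 1))) : ℂ)) x)
        = ∑ n ∈ Finset.Icc 1 N, ∑ m ∈ Finset.Icc 1 N,
          (inner ℂ (ξ n • η n) (z (max n m) (ξ m • η m)) : ℂ) := by
      have reidx : ∀ f : ℕ → ℂ, ∑ n ∈ Finset.Icc 1 N, f n = ∑ i : Fin N, f ((i : ℕ) + 1) := by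
        intro f
        rw [← Finset.Ico_add_one_right_eq_Icc, Finset.sum_Ico_eq_sum_range,
          Fin.sum_univ_eq_sum_range (fun i => f (i + 1)) N, Nat.add_sub_cancel]
        exact Finset.sum_congr rfl fun i _ => by rw [add_comm]
      simp only [dotProduct, Matrix.mulVec, Pi.star_apply, Matrix.of_apply,
        Finset.mul_sum]
      rw [reidx (fun n => ∑ m ∈ Finset.Icc 1 N, (inner ℂ (ξ n • η n) (z (max n m) (ξ m • η m)) : ℂ))]
      refine Finset.sum_congr rfl fun i _ => ?_
      rw [reidx]
      refine Finset.sum_congr rfl fun j _ => ?_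
      have hxi : ξ ((i : ℕ) + 1) = x i := by
        simp only [hξ]
        rw [dif_pos (by omega : (i : ℕ) + 1 - 1 < N)]
        congr 1
      have hxj : ξ ((j : ℕ) + 1) = x j := by
        simp only [hξ]
        rw [dif_pos (by omega : (j : ℕ) + 1 - 1 < N)]
        congr 1
      rw [map_smul, inner_smul_left, inner_smul_right, hxi, hxj]
      simp only [RCLike.star_def]
      ring
    rw [heq]
    exact key
end
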